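/- Let n ≥ 3 and let d_1 ≥ ... ≥ d_n be a graphical sequence such that every realization is 2-connected (d is forcibly biconnected). Then d_n ≥ 2 and the sum d_1 + ... + d_n ≥ 2(d_1 + n − 2). -/

import Mathlib

open SimpleGraph Finset

/-- A graph is 2-connected (biconnected) if it is connected, has at least 3 vertices,
and removing any single vertex leaves a connected graph. -/
def TwoConnected {V : Type*} [Fintype V] (G : SimpleGraph V) : Prop :=
  G.Connected ∧ 3 ≤ Fintype.card V ∧ ∀ v : V, (G.induce ({v}ᶜ : Set V)).Connected

-- connected graph has at least card - 1 edges
lemma aux_conn_edges {V : Type*} [Fintype V] (G : SimpleGraph V) [Fintype G.edgeSet]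
    (hc : G.Connected) : Fintype.card V - 1 ≤ #G.edgeFinset := by
  classical
  obtain ⟨r⟩ := hc.nonempty
  have key : ∀ v : V, v ≠ r → ∃ w, G.Adj v w ∧ G.dist w r + 1 = G.dist v r := by
    intro v hv
    obtain ⟨p, hp, hl⟩ := hc.exists_path_of_dist v r
    cases p with
    | nil => exact absurd rfl hv
    | @cons _ w _ h q =>
      refine ⟨w, h, ?_⟩
      have h1 : G.dist w r ≤ q.length := SimpleGraph.dist_le q
      have h2 : G.dist v r ≤ G.dist v w + G.dist w r := hc.dist_triangle
      have h3 : G.dist v w ≤ 1 := by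
        have := SimpleGraph.dist_le (SimpleGraph.Walk.cons h SimpleGraph.Walk.nil)
        simpa using this
      simp only [SimpleGraph.Walk.length_cons] at hl
      omega
  choose w hadj hdist using key
  have hcard : (Finset.univ.erase r).card ≤ #G.edgeFinset := by
    apply Finset.card_le_card_of_injOn
      (fun v => if h : v ≠ r then s(v, w v h) else s(r, r))
    · intro v hv
      have hvr : v ≠ r := Finset.ne_of_mem_erase hv
      simp only [dif_pos hvr]
      rw [Finset.mem_coe, SimpleGraph.mem_edgeFinset]
      exact (hadj v hvr)
    · intro a ha b hb hab
      have har : a ≠ r := Finset.ne_of_mem_erase ha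
      have hbr : b ≠ r := Finset.ne_of_mem_erase hb
      simp only [dif_pos har, dif_pos hbr, Sym2.eq_iff] at hab
      rcases hab with ⟨h1, _⟩ | ⟨h1, h2⟩
      · exact h1
      · have d1 := hdist a har
        have d2 := hdist b hbr
        rw [h2] at d1
        rw [← h1] at d2
        omega
  calc Fintype.card V - 1 = (Finset.univ.erase r).card := by
        rw [Finset.card_erase_of_mem (Finset.mem_univ r), Finset.card_univ]
      _ ≤ #G.edgeFinset := hcard

lemma aux_exists_adj {V : Type*} (G : SimpleGraph V) (hc : G.Connected) {v u : V}
    (hvu : v ≠ u) : ∃ x, G.Adj v x := by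
  obtain ⟨p⟩ := hc v u
  cases p with
  | nil => exact absurd rfl hvu
  | cons h q => exact ⟨_, h⟩


lemma aux_min_deg {V : Type*} [Fintype V] (G : SimpleGraph V) [DecidableRel G.Adj]
    (h2c : TwoConnected G) (v : V) : 2 ≤ G.degree v := by
  classical
  obtain ⟨hconn, hcard, hind⟩ := h2c
  obtain ⟨u, hu⟩ : ∃ u, G.Adj v u := by
    obtain ⟨u, hu⟩ := Fintype.exists_ne_of_one_lt_card (by omega) v
    exact aux_exists_adj G hconn (Ne.symm hu)
  have hic := hind u
  have hv : v ∈ ({u}ᶜ : Set V) := by simp [hu.ne]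
  obtain ⟨x, hx⟩ : ∃ x, x ∈ (Finset.univ \ {u, v}) := by
    apply Finset.Nonempty.exists_mem
    rw [← Finset.card_pos, Finset.card_sdiff_of_subset (by simp)]
    have : #({u, v} : Finset V) ≤ 2 := Finset.card_insert_le _ _ |>.trans (by simp)
    rw [Finset.card_univ]
    omega
  simp only [Finset.mem_sdiff, Finset.mem_univ, true_and, Finset.mem_insert,
    Finset.mem_singleton, not_or] at hx
  obtain ⟨hxu, hxv⟩ := hx
  obtain ⟨y, hy⟩ := aux_exists_adj _ hic (v := (⟨v, hv⟩ : ({u}ᶜ : Set V)))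
    (u := ⟨x, by simp [hxu]⟩) (by simp [Subtype.ext_iff, Ne.symm hxv])
  have hady : G.Adj v ↑y := hy
  have hyu : (↑y : V) ≠ u := by
    have h2 := y.2
    simp only [Set.mem_compl_iff, Set.mem_singleton_iff] at h2
    exact h2
  have hsub : ({u, ↑y} : Finset V) ⊆ G.neighborFinset v := by
    intro z hz
    simp only [Finset.mem_insert, Finset.mem_singleton] at hz
    rw [SimpleGraph.mem_neighborFinset]
    rcases hz with rfl | rfl
    · exact hu
    · exact hady
  have hle := Finset.card_le_card hsub
  rwa [Finset.card_pair (Ne.symm hyu), SimpleGraph.card_neighborFinset_eq_degree] at hle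

/-- If a graphical sequence `d` of length `n ≥ 3` is forcibly biconnected (every realization
is 2-connected), then `dₙ ≥ 2` and `Σ dᵢ ≥ 2(d₁ + n - 2)` (the Wang–Kleitman necessary
condition for potential 2-connectedness). -/
theorem stmt_16 {n : ℕ} (hn : 3 ≤ n) (d : Fin n → ℕ) (hd : Antitone d)
    (hgraphical : ∃ (G : SimpleGraph (Fin n)) (_ : DecidableRel G.Adj)
      (σ : Equiv.Perm (Fin n)), ∀ i, G.degree (σ i) = d i)
    (hforcibly : ∀ (G : SimpleGraph (Fin n)) (_ : DecidableRel G.Adj),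
      (∃ σ : Equiv.Perm (Fin n), ∀ i, G.degree (σ i) = d i) → TwoConnected G) :
    2 ≤ d ⟨n - 1, by omega⟩ ∧ 2 * (d ⟨0, by omega⟩ + n - 2) ≤ ∑ i, d i := by
  classical
  obtain ⟨G, inst, σ, hσ⟩ := hgraphical
  letI := inst
  have h2c : TwoConnected G := hforcibly G inst ⟨σ, hσ⟩
  obtain ⟨hconn, hcard, hind⟩ := h2c
  constructor
  · rw [← hσ ⟨n - 1, by omega⟩]
    exact aux_min_deg G ⟨hconn, hcard, hind⟩ _
  · set v0 := σ ⟨0, by omega⟩ with hv0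
    have hdeg0 : G.degree v0 = d ⟨0, by omega⟩ := hσ _
    set G' := G.induce ({v0}ᶜ : Set (Fin n)) with hG'
    have hccompl : Fintype.card ({v0}ᶜ : Set (Fin n)) = n - 1 := by
      rw [Fintype.card_compl_set]
      simp
    have hE' : n - 2 ≤ #G'.edgeFinset := by
      have := aux_conn_edges G' (hind v0)
      rw [hccompl] at this
      omega
    set F : Finset (Sym2 (Fin n)) := G'.edgeFinset.image (Sym2.map Subtype.val) with hF
    have hFcard : #F = #G'.edgeFinset :=
      Finset.card_image_of_injective _ (Sym2.map.injective Subtype.coe_injective)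
    have hFsub : F ⊆ G.edgeFinset \ G.incidenceFinset v0 := by
      intro e he
      rw [hF, Finset.mem_image] at he
      obtain ⟨e', he', rfl⟩ := he
      induction e' using Sym2.ind with
      | _ a b =>
        rw [SimpleGraph.mem_edgeFinset, SimpleGraph.mem_edgeSet] at he'
        have hab : G.Adj ↑a ↑b := he'
        rw [Finset.mem_sdiff]
        constructor
        · rw [Sym2.map_pair_eq, SimpleGraph.mem_edgeFinset, SimpleGraph.mem_edgeSet]
          exact hab
        · rw [SimpleGraph.mem_incidenceFinset]
          rintro ⟨-, hmem⟩
          rw [Sym2.map_pair_eq, Sym2.mem_iff] at hmem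
          rcases hmem with h | h
          · have h2 := a.2
            simp only [Set.mem_compl_iff, Set.mem_singleton_iff] at h2
            exact absurd h.symm h2
          · have h2 := b.2
            simp only [Set.mem_compl_iff, Set.mem_singleton_iff] at h2
            exact absurd h.symm h2
    have hdisj : Disjoint (G.incidenceFinset v0) F :=
      Finset.disjoint_left.mpr fun e he1 he2 =>
        (Finset.mem_sdiff.mp (hFsub he2)).2 he1
    have hunion : G.incidenceFinset v0 ∪ F ⊆ G.edgeFinset := by
      apply Finset.union_subset
      · intro e he
        rw [SimpleGraph.mem_incidenceFinset] at he
        exact SimpleGraph.mem_edgeFinset.mpr he.1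
      · exact hFsub.trans (Finset.sdiff_subset)
    have hEcount : G.degree v0 + (n - 2) ≤ #G.edgeFinset := by
      have h1 := Finset.card_le_card hunion
      rw [Finset.card_union_of_disjoint hdisj, G.card_incidenceFinset_eq_degree] at h1
      omega
    have hsum : ∑ i, d i = 2 * #G.edgeFinset := by
      rw [← G.sum_degrees_eq_twice_card_edges]
      rw [← Equiv.sum_comp σ (fun v => G.degree v)]
      exact Finset.sum_congr rfl fun i _ => (hσ i).symm
    rw [hsum]
    omega
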